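/- If M is an irreducible generator matrix (nonnegative off-diagonal entries, zero row sums, irreducible), then the system xM = 0, x𝟏 = 1 has a unique solution x, and this x has strictly positive entries. -/
import Mathlib

open Matrix Finset

private lemma abs_sum_lt_aux {n : ℕ} (f : Fin n → ℝ) (p q : Fin n) (hpq : p ≠ q)
    (hp : 0 < f p) (hq : f q < 0) : |∑ i, f i| < ∑ i, |f i| := by
  rw [abs_lt]
  constructor
  · have h : ∑ i, (-f i) < ∑ i, |f i| := by
      refine Finset.sum_lt_sum (fun i _ => neg_le_abs (f i)) ⟨p, Finset.mem_univ p, ?_⟩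
      have : 0 ≤ |f p| := abs_nonneg _
      linarith
    rw [Finset.sum_neg_distrib] at h
    linarith
  · refine Finset.sum_lt_sum (fun i _ => le_abs_self (f i)) ⟨q, Finset.mem_univ q, ?_⟩
    have : 0 ≤ |f q| := abs_nonneg _
    linarith

/-- Key lemma: any nonzero left null vector of an irreducible generator matrix has all
entries of the same strict sign. -/
private lemma key_sign {n : ℕ} (hn : 0 < n) (M : Matrix (Fin n) (Fin n) ℝ)
    (hoff : ∀ i j, i ≠ j → 0 ≤ M i j)
    (hrow : ∀ i, ∑ j, M i j = 0)
    (hirr : ∀ i j : Fin n, i ≠ j →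
      Relation.TransGen (fun a b : Fin n => a ≠ b ∧ 0 < M a b) i j)
    (x : Fin n → ℝ) (hx : Matrix.vecMul x M = 0) (hx0 : x ≠ 0) :
    (∀ i, 0 < x i) ∨ (∀ i, x i < 0) := by
  classical
  set S : ℝ := ∑ i, |M i i| with hSdef
  have hS0 : 0 ≤ S := Finset.sum_nonneg fun i _ => abs_nonneg _
  set c : ℝ := (1 + S)⁻¹ with hcdef
  have hc0 : 0 < c := by
    rw [hcdef]; exact inv_pos.mpr (by linarith)
  set P : Matrix (Fin n) (Fin n) ℝ := 1 + c • M with hPdef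
  have hPentry : ∀ i j, P i j = (if i = j then (1:ℝ) else 0) + c * M i j := by
    intro i j
    simp [hPdef, Matrix.add_apply, Matrix.smul_apply, Matrix.one_apply, smul_eq_mul]
  have hPdiag : ∀ i, 0 < P i i := by
    intro i
    have h1 : |M i i| ≤ S :=
      Finset.single_le_sum (f := fun j => |M j j|) (fun j _ => abs_nonneg (M j j)) (mem_univ i)
    have h2 : c * (1 + S) = 1 := inv_mul_cancel₀ (by linarith)
    have h3 : -(M i i) ≤ |M i i| := neg_le_abs _
    have h4 : c * (-(M i i)) ≤ c * (1 + S) := by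
      apply mul_le_mul_of_nonneg_left _ hc0.le
      linarith
    rw [hPentry, if_pos rfl]
    nlinarith
  have hPnn : ∀ i j, 0 ≤ P i j := by
    intro i j
    by_cases h : i = j
    · subst h; exact (hPdiag i).le
    · rw [hPentry, if_neg h]
      have := hoff i j h
      nlinarith
  have hPedge : ∀ a b, a ≠ b → 0 < M a b → 0 < P a b := by
    intro a b hab h
    rw [hPentry, if_neg hab]
    nlinarith
  have hProw : ∀ i, ∑ j, P i j = 1 := by
    intro i
    simp only [hPentry]
    rw [Finset.sum_add_distrib, ← Finset.mul_sum, hrow i, mul_zero, add_zero,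
      Finset.sum_ite_eq univ i (fun _ => (1:ℝ))]
    simp
  have hpow_nn : ∀ k, ∀ i j : Fin n, 0 ≤ (P ^ k) i j := by
    intro k
    induction k with
    | zero =>
      intro i j; simp only [pow_zero, Matrix.one_apply]
      split <;> norm_num
    | succ k ih =>
      intro i j
      rw [pow_succ, Matrix.mul_apply]
      exact Finset.sum_nonneg fun t _ => mul_nonneg (ih i t) (hPnn t j)
  have hpow_row : ∀ k, ∀ i : Fin n, ∑ j, (P ^ k) i j = 1 := by
    intro k
    induction k with
    | zero =>
      intro i
      simp only [pow_zero, Matrix.one_apply]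
      rw [Finset.sum_ite_eq univ i (fun _ => (1:ℝ))]
      simp
    | succ k ih =>
      intro i
      rw [pow_succ]
      simp only [Matrix.mul_apply]
      rw [Finset.sum_comm]
      simp_rw [← Finset.mul_sum, hProw, mul_one]
      exact ih i
  have hstep : ∀ k, ∀ i j m : Fin n, 0 < (P ^ k) i j → 0 < P j m → 0 < (P ^ (k + 1)) i m := by
    intro k i j m h1 h2
    rw [pow_succ, Matrix.mul_apply]
    have hle : (P ^ k) i j * P j m ≤ ∑ t, (P ^ k) i t * P t m :=
      Finset.single_le_sum (fun t _ => mul_nonneg (hpow_nn k i t) (hPnn t m)) (mem_univ j)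
    exact lt_of_lt_of_le (mul_pos h1 h2) hle
  have hreach : ∀ i j : Fin n, ∃ k, 0 < (P ^ k) i j := by
    intro i j
    by_cases hij : i = j
    · subst hij
      exact ⟨1, by rw [pow_one]; exact hPdiag i⟩
    · have h := hirr i j hij
      clear hij
      induction h with
      | single hb => exact ⟨1, by rw [pow_one]; exact hPedge _ _ hb.1 hb.2⟩
      | tail _ hbc ih =>
        obtain ⟨k, hk⟩ := ih
        exact ⟨k + 1, hstep k _ _ _ hk (hPedge _ _ hbc.1 hbc.2)⟩
  have hmono : ∀ i j : Fin n, ∀ k l, k ≤ l → 0 < (P ^ k) i j → 0 < (P ^ l) i j := by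
    intro i j k l hkl h
    induction l, hkl using Nat.le_induction with
    | base => exact h
    | succ l _ ih => exact hstep l i j j ih (hPdiag j)
  choose kf hkf using hreach
  set K : ℕ := Finset.univ.sup (fun p : Fin n × Fin n => kf p.1 p.2) with hKdef
  have hQpos : ∀ i j : Fin n, 0 < (P ^ K) i j := by
    intro i j
    exact hmono i j (kf i j) K (Finset.le_sup (f := fun p : Fin n × Fin n => kf p.1 p.2)
      (Finset.mem_univ (i, j))) (hkf i j)
  set Q : Matrix (Fin n) (Fin n) ℝ := P ^ K with hQdef
  have hQnn : ∀ i j, 0 ≤ Q i j := hpow_nn K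
  have hQrow : ∀ i, ∑ j, Q i j = 1 := hpow_row K
  have hxP : Matrix.vecMul x P = x := by
    have hsm : Matrix.vecMul x (c • M) = c • Matrix.vecMul x M := by
      ext j
      simp only [Matrix.vecMul, dotProduct, Matrix.smul_apply, smul_eq_mul,
        Pi.smul_apply, Finset.mul_sum]
      exact Finset.sum_congr rfl fun i _ => by ring
    rw [hPdef, Matrix.vecMul_add, Matrix.vecMul_one, hsm, hx, smul_zero, add_zero]
  have hxQ : ∀ j, x j = ∑ i, x i * Q i j := by
    have hpow : ∀ k, Matrix.vecMul x (P ^ k) = x := by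
      intro k
      induction k with
      | zero => rw [pow_zero, Matrix.vecMul_one]
      | succ k ih => rw [pow_succ, ← Matrix.vecMul_vecMul, ih, hxP]
    intro j
    have := congrFun (hpow K) j
    rw [← hQdef] at this
    rw [← this]
    simp [Matrix.vecMul, dotProduct]
  -- the main positivity argument, applied to x or -x
  have main : ∀ y : Fin n → ℝ, (∀ j, y j = ∑ i, y i * Q i j) →
      ∀ i0, 0 < y i0 → ∀ i, 0 < y i := by
    intro y hy i0 h0
    have hle : ∀ j, |y j| ≤ ∑ i, |y i| * Q i j := by
      intro j
      rw [hy j]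
      calc |∑ i, y i * Q i j| ≤ ∑ i, |y i * Q i j| := Finset.abs_sum_le_sum_abs _ _
        _ = ∑ i, |y i| * Q i j :=
          Finset.sum_congr rfl fun i _ => by rw [abs_mul, abs_of_nonneg (hQnn i j)]
    have hsum : ∑ j, |y j| = ∑ j, ∑ i, |y i| * Q i j := by
      rw [Finset.sum_comm]
      simp_rw [← Finset.mul_sum, hQrow, mul_one]
    have heq : ∀ j, |y j| = ∑ i, |y i| * Q i j := by
      by_contra hcon
      push_neg at hcon
      obtain ⟨j0, hj0⟩ := hcon
      have hlt : ∑ j, |y j| < ∑ j, ∑ i, |y i| * Q i j :=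
        Finset.sum_lt_sum (fun j _ => hle j) ⟨j0, Finset.mem_univ j0, lt_of_le_of_ne (hle j0) hj0⟩
      linarith [hsum]
    have hnn : ∀ m, 0 ≤ y m := by
      intro m
      by_contra hm
      push_neg at hm
      have hne : i0 ≠ m := by rintro rfl; linarith
      have hstrict : |∑ i, y i * Q i i0| < ∑ i, |y i * Q i i0| :=
        abs_sum_lt_aux (fun i => y i * Q i i0) i0 m hne
          (mul_pos h0 (hQpos i0 i0)) (mul_neg_of_neg_of_pos hm (hQpos m i0))
      have habs : ∑ i, |y i * Q i i0| = ∑ i, |y i| * Q i i0 :=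
        Finset.sum_congr rfl fun i _ => by rw [abs_mul, abs_of_nonneg (hQnn i i0)]
      rw [← hy i0, habs, ← heq i0] at hstrict
      exact absurd hstrict (lt_irrefl _)
    intro j
    rw [hy j]
    have hterm : 0 < y i0 * Q i0 j := mul_pos h0 (hQpos i0 j)
    have hle2 : y i0 * Q i0 j ≤ ∑ i, y i * Q i j :=
      Finset.single_le_sum (fun i _ => mul_nonneg (hnn i) (hQnn i j)) (mem_univ i0)
    linarith
  obtain ⟨i0, hi0⟩ := Function.ne_iff.mp hx0
  simp only [Pi.zero_apply] at hi0
  rcases lt_or_gt_of_ne hi0 with hneg | hpos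
  · right
    have hy : ∀ j, (-x) j = ∑ i, (-x) i * Q i j := by
      intro j
      simp only [Pi.neg_apply, neg_mul]
      rw [Finset.sum_neg_distrib, ← hxQ j]
    have := main (-x) hy i0 (by simpa using hneg)
    intro i
    have := this i
    simpa using this
  · left
    exact main x hxQ i0 hpos

/-- If `M` is an irreducible generator matrix, then the system
`xM = 0`, `x𝟏 = 1` has a unique solution, and it has strictly positive entries. -/
theorem stmt8 (n : ℕ) (hn : 0 < n) (M : Matrix (Fin n) (Fin n) ℝ)
    (hoff : ∀ i j, i ≠ j → 0 ≤ M i j)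
    (hrow : ∀ i, ∑ j, M i j = 0)
    (hirr : ∀ i j : Fin n, i ≠ j →
      Relation.TransGen (fun a b : Fin n => a ≠ b ∧ 0 < M a b) i j) :
    (∃! x : Fin n → ℝ, Matrix.vecMul x M = 0 ∧ ∑ i, x i = 1) ∧
    (∀ x : Fin n → ℝ, Matrix.vecMul x M = 0 → ∑ i, x i = 1 → ∀ i, 0 < x i) := by
  classical
  have hkey := key_sign hn M hoff hrow hirr
  have i1 : Fin n := ⟨0, hn⟩
  -- existence of a nonzero left null vector
  have hdet : M.det = 0 := by
    apply Matrix.exists_mulVec_eq_zero_iff.mp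
    refine ⟨fun _ => 1, ?_, ?_⟩
    · intro h
      have := congrFun h i1
      simpa using this
    · funext i
      simp [Matrix.mulVec, dotProduct, hrow i]
  obtain ⟨x0, hx0ne, hx0⟩ := Matrix.exists_vecMul_eq_zero_iff.mpr hdet
  have hx0sign := hkey x0 hx0 hx0ne
  have hsne : (∑ i, x0 i) ≠ 0 := by
    rcases hx0sign with h | h
    · exact ne_of_gt (Finset.sum_pos (fun i _ => h i) ⟨i1, mem_univ _⟩)
    · have : 0 < ∑ i, (-x0 i) := Finset.sum_pos (fun i _ => by linarith [h i]) ⟨i1, mem_univ _⟩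
      rw [Finset.sum_neg_distrib] at this
      linarith
  set s : ℝ := ∑ i, x0 i with hsdef
  have hx1 : Matrix.vecMul (s⁻¹ • x0) M = 0 := by
    rw [Matrix.smul_vecMul, hx0, smul_zero]
  have hx2 : ∑ i, (s⁻¹ • x0) i = 1 := by
    simp only [Pi.smul_apply, smul_eq_mul, ← Finset.mul_sum, ← hsdef]
    exact inv_mul_cancel₀ hsne
  have uniq : ∀ y z : Fin n → ℝ, Matrix.vecMul y M = 0 → Matrix.vecMul z M = 0 →
      ∑ i, y i = 1 → ∑ i, z i = 1 → y = z := by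
    intro y z hy hz hys hzs
    by_contra hne
    have hd : Matrix.vecMul (y - z) M = 0 := by
      rw [Matrix.sub_vecMul, hy, hz, sub_zero]
    have hdne : y - z ≠ 0 := sub_ne_zero.mpr hne
    have hdsum : ∑ i, (y - z) i = 0 := by
      simp only [Pi.sub_apply]
      rw [Finset.sum_sub_distrib, hys, hzs, sub_self]
    rcases hkey (y - z) hd hdne with h | h
    · have : 0 < ∑ i, (y - z) i := Finset.sum_pos (fun i _ => h i) ⟨i1, mem_univ _⟩
      linarith
    · have : 0 < ∑ i, (-(y - z) i) :=
        Finset.sum_pos (fun i _ => by linarith [h i]) ⟨i1, mem_univ _⟩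
      rw [Finset.sum_neg_distrib] at this
      linarith
  constructor
  · exact ⟨s⁻¹ • x0, ⟨hx1, hx2⟩, fun y hy => uniq y (s⁻¹ • x0) hy.1 hx1 hy.2 hx2⟩
  · intro x hxM hxs i
    have hxne : x ≠ 0 := by
      intro h
      rw [h] at hxs
      simpa using hxs
    rcases hkey x hxM hxne with h | h
    · exact h i
    · exfalso
      have : 0 < ∑ i, (-x i) := Finset.sum_pos (fun i _ => by linarith [h i]) ⟨i1, mem_univ _⟩
      rw [Finset.sum_neg_distrib] at this
      linarith
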